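/- Let f : ℝⁿ → ℝ be measurable, nonnegative, positively homogeneous of degree d > 0, with bounded sublevel set G = {f ≤ 1}. Then for every multi-index α, ∫_G x^α f(x) dx = ((n+|α|)/(n+d+|α|)) ∫_G x^α dx. -/

import Mathlib

open MeasureTheory

/-- Case `k = 1` of the main identity: for `f` measurable, nonnegative, positively
homogeneous of degree `d > 0` with bounded sublevel set `G = {f ≤ 1}`,
`∫_G x^α f(x) dx = ((n+|α|)/(n+d+|α|)) ∫_G x^α dx` for every multi-index `α`. -/
theorem moment_identity_k_one (n : ℕ) (hn : 0 < n) (d : ℝ) (hd : 0 < d)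
    (f : (Fin n → ℝ) → ℝ) (hmeas : Measurable f) (hpos : ∀ x, 0 ≤ f x)
    (hhom : ∀ c : ℝ, 0 < c → ∀ x, f (c • x) = c ^ d * f x)
    (hbdd : Bornology.IsBounded {x : Fin n → ℝ | f x ≤ 1}) :
    ∀ α : Fin n → ℕ,
      ∫ x in {x : Fin n → ℝ | f x ≤ 1}, (∏ i, x i ^ α i) * f x =
        (((n : ℝ) + ∑ i, (α i : ℝ)) / ((n : ℝ) + d + ∑ i, (α i : ℝ))) *
          ∫ x in {x : Fin n → ℝ | f x ≤ 1}, ∏ i, x i ^ α i := by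
  intro α
  have hGmeas : MeasurableSet {x : Fin n → ℝ | f x ≤ 1} := hmeas measurableSet_Iic
  rw [show (∑ i, (α i : ℝ)) = ((∑ i, α i : ℕ) : ℝ) by push_cast; ring]
  set s : ℕ := ∑ i, α i with hs
  set P : (Fin n → ℝ) → ℝ := fun x => ∏ i, x i ^ α i with hPdef
  set G : Set (Fin n → ℝ) := {x : Fin n → ℝ | f x ≤ 1} with hGdef
  set A : ℝ := ∫ x in G, P x with hA
  set r : ℝ := ((n : ℝ) + (s : ℝ)) / d with hr
  have hr0 : 0 < r := div_pos (by positivity) hd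
  -- measurability of P
  have hPmeas : Measurable P := by
    apply Finset.measurable_prod
    exact fun i _ => (measurable_pi_apply i).pow_const (α i)
  -- bound on P over G
  obtain ⟨C, hC⟩ := isBounded_iff_forall_norm_le.1 hbdd
  set M : ℝ := max C 1 with hM
  have hM0 : 0 ≤ M := le_trans zero_le_one (le_max_right _ _)
  have hPle : ∀ x ∈ G, |P x| ≤ M ^ s := by
    intro x hx
    have h1 : |P x| = ∏ i, |x i| ^ α i := by
      rw [hPdef]; rw [Finset.abs_prod]
      exact Finset.prod_congr rfl fun i _ => (abs_pow _ _)
    rw [h1, hs, ← Finset.prod_pow_eq_pow_sum]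
    refine Finset.prod_le_prod (fun i _ => by positivity) (fun i _ => ?_)
    refine pow_le_pow_left₀ (abs_nonneg _) ?_ _
    calc |x i| = ‖x i‖ := (Real.norm_eq_abs _).symm
      _ ≤ ‖x‖ := norm_le_pi_norm x i
      _ ≤ C := hC x hx
      _ ≤ M := le_max_left _ _
  have hGfin : volume G < ⊤ := hbdd.measure_lt_top
  haveI : IsFiniteMeasure (volume.restrict G) :=
    ⟨by rw [Measure.restrict_apply_univ]; exact hGfin⟩
  haveI : IsFiniteMeasure (volume.restrict (Set.Ioc (0:ℝ) 1)) :=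
    ⟨by rw [Measure.restrict_apply_univ]; exact measure_Ioc_lt_top⟩
  have hPint : IntegrableOn P G := by
    refine Integrable.mono' (integrable_const (M ^ s)) hPmeas.aestronglyMeasurable ?_
    refine (ae_restrict_iff' hGmeas).2 (ae_of_all _ fun x hx => ?_)
    simpa [Real.norm_eq_abs] using hPle x hx
  -- the scaling identity
  have key : ∀ t : ℝ, 0 < t →
      ∫ x in {x : Fin n → ℝ | f x ≤ t}, P x = t ^ r * A := by
    intro t ht
    set c : ℝ := t ^ (1/d : ℝ) with hc
    have hc0 : 0 < c := Real.rpow_pos_of_pos ht _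
    have hcd : c ^ d = t := by
      rw [hc, ← Real.rpow_mul ht.le, one_div, inv_mul_cancel₀ hd.ne', Real.rpow_one]
    have hset : ∀ x, f (c • x) ≤ t ↔ f x ≤ 1 := by
      intro x
      rw [hhom c hc0 x, hcd]
      constructor
      · intro h; nlinarith [hpos x]
      · intro h; nlinarith [hpos x]
    have h1 := Measure.integral_comp_smul (volume : Measure (Fin n → ℝ))
      (Set.indicator {x : Fin n → ℝ | f x ≤ t} P) c
    have hfun : ∀ x, Set.indicator {x : Fin n → ℝ | f x ≤ t} P (c • x)
        = c ^ s * Set.indicator G P x := by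
      intro x
      by_cases hx : f x ≤ 1
      · rw [Set.indicator_of_mem (by exact (hset x).2 hx),
          Set.indicator_of_mem (by exact hx)]
        rw [hPdef]
        simp only [Pi.smul_apply, smul_eq_mul, mul_pow]
        rw [Finset.prod_mul_distrib, Finset.prod_pow_eq_pow_sum, hs]
      · have h1 : c • x ∉ {x : Fin n → ℝ | f x ≤ t} := fun h => hx ((hset x).1 h)
        have h2 : x ∉ G := hx
        rw [Set.indicator_of_notMem h1, Set.indicator_of_notMem h2, mul_zero]
    simp only [hfun] at h1
    have htmeas : MeasurableSet {x : Fin n → ℝ | f x ≤ t} := hmeas measurableSet_Iic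
    rw [integral_const_mul, integral_indicator hGmeas, ← hA,
      integral_indicator htmeas] at h1
    have hfr : Module.finrank ℝ (Fin n → ℝ) = n := by
      rw [Module.finrank_pi]; exact Fintype.card_fin n
    rw [hfr, abs_of_pos (by positivity), smul_eq_mul] at h1
    have hcn : (0:ℝ) < c ^ n := by positivity
    have h2 : ∫ x in {x : Fin n → ℝ | f x ≤ t}, P x = c ^ n * (c ^ s * A) := by
      field_simp at h1
      rw [← h1]; ring
    rw [h2, ← mul_assoc, ← pow_add]
    congr 1
    rw [hc, ← Real.rpow_natCast (t ^ (1/d:ℝ)) (n + s), ← Real.rpow_mul ht.le, hr]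
    congr 1
    push_cast
    ring
  -- Fubini setup
  set H : (Fin n → ℝ) × ℝ → ℝ :=
    fun p => P p.1 * (if p.2 < f p.1 then (1:ℝ) else 0) with hHdef
  have hHmeas : Measurable H :=
    (hPmeas.comp measurable_fst).mul
      (Measurable.ite (measurableSet_lt measurable_snd (hmeas.comp measurable_fst))
        measurable_const measurable_const)
  have hHint : Integrable H ((volume.restrict G).prod (volume.restrict (Set.Ioc (0:ℝ) 1))) := by
    refine Integrable.mono' (integrable_const (M ^ s)) hHmeas.aestronglyMeasurable ?_
    rw [Measure.prod_restrict]
    refine (ae_restrict_iff' (hGmeas.prod measurableSet_Ioc)).2 (ae_of_all _ fun p hp => ?_)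
    have hp1 : p.1 ∈ G := hp.1
    rw [hHdef]
    simp only [Real.norm_eq_abs, abs_mul]
    calc |P p.1| * |if p.2 < f p.1 then (1:ℝ) else 0| ≤ |P p.1| * 1 := by
          refine mul_le_mul_of_nonneg_left ?_ (abs_nonneg _)
          split <;> simp
      _ ≤ M ^ s := by rw [mul_one]; exact hPle p.1 hp1
  -- step 1
  have step1 : ∫ x in G, P x * f x = ∫ x in G, ∫ t in Set.Ioc (0:ℝ) 1, H (x, t) := by
    refine setIntegral_congr_fun hGmeas fun x hx => ?_
    rw [hHdef]
    simp only
    rw [integral_const_mul]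
    congr 1
    have hite : (fun t : ℝ => if t < f x then (1:ℝ) else 0)
        = Set.indicator (Set.Iio (f x)) (fun _ => (1:ℝ)) := by
      ext t; simp [Set.indicator_apply]
    rw [hite, integral_indicator measurableSet_Iio, setIntegral_const,
      Measure.real, Measure.restrict_apply measurableSet_Iio]
    have hxle : f x ≤ 1 := hx
    have hseteq : Set.Iio (f x) ∩ Set.Ioc (0:ℝ) 1 = Set.Ioo 0 (f x) := by
      ext t
      simp only [Set.mem_inter_iff, Set.mem_Iio, Set.mem_Ioc, Set.mem_Ioo]
      constructor
      · rintro ⟨h1, h2, h3⟩; exact ⟨h2, h1⟩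
      · rintro ⟨h1, h2⟩; exact ⟨h2, h1, le_trans h2.le hxle⟩
    rw [hseteq, Real.volume_Ioo, smul_eq_mul, mul_one,
      ENNReal.toReal_ofReal (by linarith [hpos x])]
    ring
  -- step 2: swap
  have step2 : ∫ x in G, ∫ t in Set.Ioc (0:ℝ) 1, H (x, t)
      = ∫ t in Set.Ioc (0:ℝ) 1, ∫ x in G, H (x, t) :=
    integral_integral_swap hHint
  -- step 3
  have step3 : ∫ t in Set.Ioc (0:ℝ) 1, ∫ x in G, H (x, t)
      = ∫ t in Set.Ioc (0:ℝ) 1, (1 - t ^ r) * A := by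
    refine setIntegral_congr_fun measurableSet_Ioc fun t ht => ?_
    have htmeas : MeasurableSet {x : Fin n → ℝ | f x ≤ t} := hmeas measurableSet_Iic
    have hsub : {x : Fin n → ℝ | f x ≤ t} ⊆ G := fun x hx => le_trans hx ht.2
    have hrepr : ∀ x : Fin n → ℝ, H (x, t)
        = P x - Set.indicator {x : Fin n → ℝ | f x ≤ t} P x := by
      intro x
      rw [hHdef]
      simp only
      by_cases h : t < f x
      · rw [if_pos h, Set.indicator_of_notMem (by simpa using not_le.2 h), mul_one, sub_zero]
      · rw [if_neg h, Set.indicator_of_mem (by simpa using not_lt.1 h), mul_zero]; ring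
    simp only [hrepr]
    have hIndInt : Integrable (Set.indicator {x : Fin n → ℝ | f x ≤ t} P)
        (volume.restrict G) := by
      refine MeasureTheory.Integrable.mono hPint ((hPmeas.indicator htmeas).aestronglyMeasurable) (ae_of_all _ fun x => ?_)
      exact norm_indicator_le_norm_self P x
    rw [integral_sub hPint hIndInt, integral_indicator htmeas,
      Measure.restrict_restrict htmeas, Set.inter_eq_left.2 hsub, key t ht.1, ← hA]
    ring
  -- step 4
  have hint1 : ∫ t in Set.Ioc (0:ℝ) 1, t ^ r = 1 / (r + 1) := by
    rw [← intervalIntegral.integral_of_le zero_le_one,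
      integral_rpow (Or.inl (by linarith))]
    rw [Real.one_rpow, Real.zero_rpow (by linarith)]
    ring
  have hrint : IntegrableOn (fun t : ℝ => t ^ r) (Set.Ioc (0:ℝ) 1) :=
    (intervalIntegral.intervalIntegrable_rpow (Or.inl (by linarith))).1
  have step4 : ∫ t in Set.Ioc (0:ℝ) 1, (1 - t ^ r) * A = (r / (r + 1)) * A := by
    rw [MeasureTheory.integral_mul_const,
      integral_sub (integrable_const 1) hrint, hint1, integral_const,
      Measure.real, Measure.restrict_apply_univ, Real.volume_Ioc, smul_eq_mul,
      ENNReal.toReal_ofReal (by norm_num), sub_zero, mul_one]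
    congr 1
    field_simp
    ring
  have hcoef : r / (r + 1) = ((n:ℝ) + (s:ℝ)) / ((n:ℝ) + d + (s:ℝ)) := by
    have h1 : (0:ℝ) < r + 1 := by linarith
    have h2 : (0:ℝ) < (n:ℝ) + d + (s:ℝ) := by positivity
    rw [div_eq_div_iff h1.ne' h2.ne']
    have hrd : r * d = (n:ℝ) + (s:ℝ) := by rw [hr]; field_simp
    linear_combination hrd
  rw [step1, step2, step3, step4, hcoef]
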